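/- arXiv:2105.08951 — 10 statements merged into one kernel-verified Lean document; each statement's English description precedes it below -/
import Mathlib

section
/- Let B be a nonempty finite type and T a predicate on B*. Then T is productive if and only if T has unbounded paths, and T is inductively barred if and only if T is uniformly barred. -/
namespace BarInd

variable {A B : Type*}

/-- `u` is an initial prefix of the infinite sequence `α`. -/
def SeqPrefix (u : List B) (α : ℕ → B) : Prop := ∀ i : Fin u.length, u.get i = α i

/-- `T` is a tree: closed under restriction. -/
def IsTree (T : List B → Prop) : Prop := ∀ u a, T (u ++ [a]) → T u
/-- `T` is monotone: closed under extension. -/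
def IsMono (T : List B → Prop) : Prop := ∀ u a, T u → T (u ++ [a])
/-- Downwards arborification `⌊T⌋`. -/
def DownArbor (T : List B → Prop) : List B → Prop := fun u => ∀ u', u' <+: u → T u'
/-- Upwards monotonisation `⌈T⌉`. -/
def UpMonot (T : List B → Prop) : List B → Prop := fun u => ∃ u', u' <+: u ∧ T u'
def UnboundedPaths (T : List B → Prop) : Prop := ∀ n, ∃ u, u.length = n ∧ DownArbor T u
def StagedInfinite (T : List B → Prop) : Prop := ∀ n, ∃ u : List B, u.length = n ∧ T u
def UniformlyBarred (T : List B → Prop) : Prop := ∃ n, ∀ u : List B, u.length = n → UpMonot T u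
def StagedBarred (T : List B → Prop) : Prop := ∃ n, ∀ u : List B, u.length = n → T u

/-- `u` is in the pruning of `T` (coinductive/greatest fixed point, impredicative encoding). -/
def Pruning (T : List B → Prop) (u : List B) : Prop :=
  ∃ X : List B → Prop, X u ∧ ∀ v, X v → T v ∧ ∃ a, X (v ++ [a])
def Productive (T : List B → Prop) : Prop := Pruning T []

/-- Hereditary closure of `T` (least fixed point). -/
inductive HerClos (T : List B → Prop) : List B → Prop
  | base (u : List B) : T u → HerClos T u
  | step (u : List B) : (∀ a, HerClos T (u ++ [a])) → HerClos T u

def IndBarred (T : List B → Prop) : Prop := HerClos T []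
def Spread (T : List B → Prop) : Prop := T [] ∧ ∀ u, T u → ∃ a, T (u ++ [a])
def Hereditary (T : List B → Prop) : Prop := ∀ u, (∀ a, T (u ++ [a])) → T u
def Barricaded (T : List B → Prop) : Prop := Hereditary T → T []
def InfBranch (T : List B → Prop) : Prop := ∃ α : ℕ → B, ∀ u, SeqPrefix u α → T u
def Barred (T : List B → Prop) : Prop := ∀ α : ℕ → B, ∃ u, SeqPrefix u α ∧ T u

/- Finite approximations of functions: sequences of pairs. -/

/-- `v ⊆ v'` : every pair occurring in `v` occurs in `v'`. -/
def PSub (v v' : List (A × B)) : Prop := ∀ x, x ∈ v → x ∈ v'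
/-- `a` is in the domain of `w`. -/
def InDom (w : List (A × B)) (a : A) : Prop := ∃ b, (a, b) ∈ w
/-- `T` is `A`-`B`-approximable from `v` (coinductive, impredicative encoding). -/
def ApproxFrom (T : List (A × B) → Prop) (v : List (A × B)) : Prop :=
  ∃ X : List (A × B) → Prop, X v ∧
    ∀ w, X w → ((∀ v', PSub v' w → T v') ∧ ∀ a, ¬ InDom w a → ∃ b, X (w ++ [(a, b)]))
/-- `T` is `A`-`B`-approximable. -/
def Approximable (T : List (A × B) → Prop) : Prop := ApproxFrom T []

/-- `T` is inductively `A`-`B`-barred from a sequence (least fixed point). -/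
inductive IndPairBarred (T : List (A × B) → Prop) : List (A × B) → Prop
  | base (w : List (A × B)) : (∃ v, PSub v w ∧ T v) → IndPairBarred T w
  | step (w : List (A × B)) (a : A) : ¬ InDom w a →
      (∀ b, IndPairBarred T (w ++ [(a, b)])) → IndPairBarred T w

def InductivelyPairBarred (T : List (A × B) → Prop) : Prop := IndPairBarred T []
/-- `v ≺ α` : `α a = b` for every `(a,b) ∈ v`. -/
def PairPrefix (v : List (A × B)) (α : A → B) : Prop := ∀ p ∈ v, α p.1 = p.2
def PairChoiceFn (T : List (A × B) → Prop) : Prop := ∃ α : A → B, ∀ v, PairPrefix v α → T v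
def PairBarred (T : List (A × B) → Prop) : Prop := ∀ α : A → B, ∃ v, PairPrefix v α ∧ T v

/-- `ord u` pairs each element of `u` with its position. -/
def ordSeq (u : List B) : List (ℕ × B) := u.zipIdx.map Prod.swap
/-- `T̂` : the lift of a predicate on `B*` to `(ℕ × B)*`. -/
def hatT (T : List B → Prop) : List (ℕ × B) → Prop := fun v => ∃ u, T u ∧ v = ordSeq u
/-- `‖T‖` : the restriction of a predicate on `(ℕ × B)*` to sequential sequences. -/
def normT (T : List (ℕ × B) → Prop) : List B → Prop := fun u => T (ordSeq u)
/-- Upwards arborification w.r.t. `⊆`. -/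
def UpPairArbor (S : List (A × B) → Prop) : List (A × B) → Prop :=
  fun v => ∃ v', PSub v v' ∧ S v'
/-- Upwards monotonisation w.r.t. `⊆`. -/
def UpPairMonot (S : List (A × B) → Prop) : List (A × B) → Prop :=
  fun v => ∃ v', PSub v' v ∧ S v'

/-- Chaining `R*⊤(b)` : all steps in `u` from `b` are in `R`. -/
def Chaining (R : B → B → Prop) : B → List B → Prop
  | _, [] => True
  | b, b' :: u => R b b' ∧ Chaining R b' u

/-- Antichaining `R*⊥(b)`. -/
def Antichaining (R : B → B → Prop) : B → List B → Prop
  | _, [] => False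
  | b, b' :: u => R b b' ∨ Antichaining R b' u

/-- Positive alignment `R▷⊤(b₀)`. -/
def PosAlign (R : B → B → Prop) (b₀ : B) (u : List B) : Prop :=
  match u.reverse with
  | [] => True
  | [b] => R b₀ b
  | b' :: b :: _ => R b b'

/-- Blockings `R▷⊥(b₀)`. -/
def Blockings (R : B → B → Prop) (b₀ : B) (u : List B) : Prop :=
  match u.reverse with
  | [] => False
  | [b] => R b₀ b
  | b' :: b :: _ => R b b'

/-- Sequential positive alignment `R^ℕ⊤`. -/
def SeqPosAlign (R : ℕ → B → Prop) (u : List B) : Prop :=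
  match u.reverse with
  | [] => True
  | b :: v => R v.length b

/-- Sequential negative alignment `R^ℕ⊥`. -/
def SeqNegAlign (R : ℕ → B → Prop) (u : List B) : Prop :=
  match u.reverse with
  | [] => False
  | b :: v => R v.length b

end BarInd

namespace BarInd

private lemma prefix_app {l w w' : List B} (h : w <+: w') : l ++ w <+: l ++ w' := by
  obtain ⟨t, rfl⟩ := h
  exact ⟨t, List.append_assoc _ _ _⟩

private lemma downArbor_of_prefix {T : List B → Prop} {u v : List B}
    (h : u <+: v) (hv : DownArbor T v) : DownArbor T u :=
  fun w hw => hv w (hw.trans h)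

end BarInd

open BarInd in
theorem stmt5 {B : Type*} [Nonempty B] [Finite B] (T : List B → Prop) :
    (Productive T ↔ UnboundedPaths T) ∧ (IndBarred T ↔ UniformlyBarred T) := by
  haveI := Fintype.ofFinite B
  have psnoc : ∀ {u' u : List B} {a : B}, u' <+: u ++ [a] → u' <+: u ∨ u' = u ++ [a] := by
    intro u' u a h
    rcases List.prefix_concat_iff.mp h with h1 | h2
    · exact Or.inr h1
    · exact Or.inl h2
  constructor
  · constructor
    · rintro ⟨X, hX0, hXstep⟩ n
      have key : ∀ n, ∃ u : List B, u.length = n ∧ X u ∧ DownArbor T u := by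
        intro n
        induction n with
        | zero =>
          refine ⟨[], rfl, hX0, fun u' h => ?_⟩
          rw [List.prefix_nil.mp h]
          exact (hXstep [] hX0).1
        | succ n ih =>
          obtain ⟨u, hl, hXu, hD⟩ := ih
          obtain ⟨a, hXa⟩ := (hXstep u hXu).2
          refine ⟨u ++ [a], by simp [hl], hXa, fun u' h => ?_⟩
          rcases psnoc h with h1 | h1
          · exact hD u' h1
          · rw [h1]; exact (hXstep _ hXa).1
      obtain ⟨u, hl, _, hD⟩ := key n
      exact ⟨u, hl, hD⟩
    · intro h
      refine ⟨fun v => ∀ n, ∃ w : List B, w.length = n ∧ DownArbor T (v ++ w),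
        fun n => by simpa using h n, fun v hv => ?_⟩
      constructor
      · obtain ⟨w, hw0, hD⟩ := hv 0
        rw [List.length_eq_zero_iff.mp hw0] at hD
        exact hD v (by simp)
      · by_contra hc
        push_neg at hc
        have hc' : ∀ a : B, ∃ n, ∀ w : List B, w.length = n → ¬ DownArbor T (v ++ [a] ++ w) := by
          intro a
          obtain ⟨n, hn⟩ := hc a
          refine ⟨n, ?_⟩
          intro w hw hD
          exact hn w hw hD
        choose f hf using hc'
        set N := Finset.univ.sup f with hN
        obtain ⟨w, hwl, hD⟩ := hv (N + 1)
        cases w with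
        | nil => simp at hwl
        | cons a w' =>
          have hw' : w'.length = N := by simpa using hwl
          have hle : f a ≤ w'.length := by rw [hw']; exact Finset.le_sup (Finset.mem_univ a)
          refine hf a (w'.take (f a)) (by simp [hle]) ?_
          have hpre : v ++ [a] ++ w'.take (f a) <+: v ++ (a :: w') := by
            have : v ++ [a] ++ w'.take (f a) <+: v ++ [a] ++ w' :=
              prefix_app (List.take_prefix _ _)
            simpa [List.append_assoc] using this
          exact downArbor_of_prefix hpre hD
  · constructor
    · intro h
      have key : ∀ u, HerClos T u → ∃ n, ∀ w : List B, w.length = n → UpMonot T (u ++ w) := by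
        intro u hu
        induction hu with
        | base u hT =>
          refine ⟨0, fun w hw => ?_⟩
          rw [List.length_eq_zero_iff.mp hw]
          exact ⟨u, by simp, hT⟩
        | step u _ ih =>
          choose f hf using ih
          refine ⟨Finset.univ.sup f + 1, fun w hw => ?_⟩
          cases w with
          | nil => simp at hw
          | cons a w' =>
            have hw' : w'.length = Finset.univ.sup f := by simpa using hw
            have hle : f a ≤ w'.length := by rw [hw']; exact Finset.le_sup (Finset.mem_univ a)
            obtain ⟨u', hu', hT⟩ := hf a (w'.take (f a)) (by simp [hle])
            refine ⟨u', hu'.trans ?_, hT⟩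
            have : u ++ [a] ++ w'.take (f a) <+: u ++ [a] ++ w' :=
              prefix_app (List.take_prefix _ _)
            simpa [List.append_assoc] using this
      obtain ⟨n, hn⟩ := key [] h
      exact ⟨n, fun u hu => by simpa using hn u hu⟩
    · rintro ⟨n, hn⟩
      have key : ∀ k, ∀ u : List B, u.length + k = n → UpMonot T u ∨ HerClos T u := by
        intro k
        induction k with
        | zero => intro u hu; exact Or.inl (hn u (by omega))
        | succ k ih =>
          intro u hu
          by_cases hU : UpMonot T u
          · exact Or.inl hU
          · refine Or.inr (HerClos.step u fun a => ?_)
            rcases ih (u ++ [a]) (by simp; omega) with h1 | h1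
            · obtain ⟨u', hu', hT⟩ := h1
              rcases psnoc hu' with h2 | h2
              · exact absurd ⟨u', h2, hT⟩ hU
              · exact HerClos.base _ (h2 ▸ hT)
            · exact h1
      rcases key n [] (by simp) with h1 | h1
      · obtain ⟨u', hu', hT⟩ := h1
        rw [List.prefix_nil.mp hu'] at hT
        exact HerClos.base _ hT
      · exact h1
end

section
/- Let B be a type. Then: (∀ predicate T on B*, T a spread → T has an infinite branch) holds if and only if (∀ predicate T on B*, T productive → T has an infinite branch) holds; and dually, (∀ predicate T on B*, T barred → T barricaded) holds if and only if (∀ predicate T on B*, T barred → T inductively barred) holds. -/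
open BarInd in
theorem stmt6 {B : Type*} :
    ((∀ T : List B → Prop, Spread T → InfBranch T) ↔
      (∀ T : List B → Prop, Productive T → InfBranch T)) ∧
    ((∀ T : List B → Prop, Barred T → Barricaded T) ↔
      (∀ T : List B → Prop, Barred T → IndBarred T)) := by
  constructor
  · constructor
    · intro h T hT
      -- apply h to Pruning T
      have hs : Spread (Pruning T) := by
        constructor
        · exact hT
        · rintro u ⟨X, hXu, hX⟩
          obtain ⟨-, a, hXa⟩ := hX u hXu
          exact ⟨a, X, hXa, hX⟩
      obtain ⟨α, hα⟩ := h (Pruning T) hs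
      refine ⟨α, fun u hu => ?_⟩
      obtain ⟨X, hXu, hX⟩ := hα u hu
      exact (hX u hXu).1
    · intro h T hT
      exact h T ⟨T, hT.1, fun v hv => ⟨hv, hT.2 v hv⟩⟩
  · constructor
    · intro h T hT
      have hb : Barred (HerClos T) := fun α => by
        obtain ⟨u, hu, hTu⟩ := hT α
        exact ⟨u, hu, HerClos.base u hTu⟩
      exact h (HerClos T) hb (fun u => HerClos.step u)
    · intro h T hT hher
      have key : ∀ u, HerClos T u → T u := by
        intro u hu
        induction hu with
        | base u hu => exact hu
        | step u _ ih => exact hher u ih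
      exact key [] (h T hT)
end

section
/- Let B be a nonempty finite type. Then: (∀ predicate T on B*, T a staged infinite tree → T has an infinite branch) holds if and only if (∀ predicate T on B*, T has unbounded paths → T has an infinite branch) holds; and dually, (∀ predicate T on B*, T barred and monotone → T staged barred) holds if and only if (∀ predicate T on B*, T barred → T uniformly barred) holds. -/
open BarInd in
lemma tree_prefix_closed {B : Type*} {T : List B → Prop} (hT : IsTree T) :
    ∀ u, T u → ∀ u', u' <+: u → T u' := by
  intro u
  induction u using List.reverseRecOn with
  | nil =>
    intro h u' hp
    rw [List.prefix_nil.mp hp]; exact h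
  | append_singleton v a ih =>
    intro h u' hp
    obtain ⟨t, ht⟩ := hp
    rcases t.eq_nil_or_concat with rfl | ⟨t', b, rfl⟩
    · simp only [List.append_nil] at ht
      rwa [ht]
    · rw [List.concat_eq_append, ← List.append_assoc] at ht
      obtain ⟨h1, _⟩ := List.append_inj' ht rfl
      exact ih (hT v a h) u' ⟨t', h1⟩

open BarInd in
lemma mono_prefix_ext {B : Type*} {T : List B → Prop} (hM : IsMono T) :
    ∀ u' u : List B, T u' → u' <+: u → T u := by
  intro u' u h hp
  obtain ⟨t, rfl⟩ := hp
  induction t using List.reverseRecOn with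
  | nil => simpa using h
  | append_singleton s b ih =>
    rw [← List.append_assoc]
    exact hM _ b ih

open BarInd in
theorem stmt7 {B : Type*} [Nonempty B] [Finite B] :
    ((∀ T : List B → Prop, StagedInfinite T → IsTree T → InfBranch T) ↔
      (∀ T : List B → Prop, UnboundedPaths T → InfBranch T)) ∧
    ((∀ T : List B → Prop, Barred T → IsMono T → StagedBarred T) ↔
      (∀ T : List B → Prop, Barred T → UniformlyBarred T)) := by
  constructor
  · constructor
    · intro H T hU
      obtain ⟨α, hα⟩ := H (DownArbor T)
        (fun n => hU n)
        (fun u a h u' hp => h u' (hp.trans ⟨[a], rfl⟩))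
      exact ⟨α, fun u hu => hα u hu u (List.prefix_refl u)⟩
    · intro H T hS hT
      apply H T
      intro n
      obtain ⟨u, hl, hu⟩ := hS n
      exact ⟨u, hl, fun u' hp => tree_prefix_closed hT u hu u' hp⟩
  · constructor
    · intro H T hB
      exact H (UpMonot T)
        (fun α => (hB α).imp fun u ⟨hp, hu⟩ => ⟨hp, u, List.prefix_refl u, hu⟩)
        (fun u a ⟨u', hp, hu'⟩ => ⟨u', hp.trans ⟨[a], rfl⟩, hu'⟩)
    · intro H T hB hM
      obtain ⟨n, hn⟩ := H T hB
      exact ⟨n, fun u hu =>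
        let ⟨u', hp, hu'⟩ := hn u hu
        mono_prefix_ext hM u' u hu' hp⟩
end

section
/- Let B be a type and R a binary relation on B. If R is serial (∀ b, ∃ b', R(b,b')), then for every b₀ ∈ B the positive alignment R▷⊤(b₀) is productive. Dually, if for some b₀ the blockings R▷⊥(b₀) is inductively barred, then R has a least element, i.e. ∃ b, ∀ b', R(b,b'). -/
open BarInd in
theorem posAlign_snoc {B : Type*} (R : B → B → Prop) (b₀ : B) (u : List B) (a : B) :
    PosAlign R b₀ (u ++ [a]) ↔ R (u.reverse.headD b₀) a := by
  unfold PosAlign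
  rw [List.reverse_append]
  cases u.reverse with
  | nil => simp
  | cons b t => simp

open BarInd in
theorem blockings_snoc {B : Type*} (R : B → B → Prop) (b₀ : B) (u : List B) (a : B) :
    Blockings R b₀ (u ++ [a]) ↔ R (u.reverse.headD b₀) a := by
  unfold Blockings
  rw [List.reverse_append]
  cases u.reverse with
  | nil => simp
  | cons b t => simp

open BarInd in
theorem block_aux {B : Type*} (R : B → B → Prop) (b₀ : B) (u : List B)
    (h : HerClos (Blockings R b₀) u) :
    Blockings R b₀ u ∨ ∃ b, ∀ b', R b b' := by
  induction h with
  | base u hu => exact Or.inl hu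
  | step u h ih =>
    right
    by_cases hg : ∃ b, ∀ b', R b b'
    · exact hg
    · refine ⟨u.reverse.headD b₀, fun b' => ?_⟩
      rcases ih b' with hb | hb
      · exact (blockings_snoc R b₀ u b').mp hb
      · exact absurd hb hg

open BarInd in
theorem stmt9 {B : Type*} (R : B → B → Prop) :
    ((∀ b, ∃ b', R b b') → ∀ b₀, Productive (PosAlign R b₀)) ∧
    ((∃ b₀, IndBarred (Blockings R b₀)) → ∃ b, ∀ b', R b b') := by
  constructor
  · intro ser b₀
    refine ⟨PosAlign R b₀, trivial, fun v hv => ⟨hv, ?_⟩⟩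
    obtain ⟨b', hb'⟩ := ser (v.reverse.headD b₀)
    exact ⟨b', (posAlign_snoc R b₀ v b').mpr hb'⟩
  · rintro ⟨b₀, hb⟩
    rcases block_aux R b₀ [] hb with h | h
    · exact absurd h (by simp [Blockings])
    · exact h
end

section
/- The following two schemes are logically equivalent: (i) for every type B and every predicate T on B*, if T is productive then T has an infinite branch; (ii) for every type B, every binary relation R on B, and every b₀ ∈ B, if R is serial (∀ b, ∃ b', R(b,b')) then the positive alignment R▷⊤(b₀) has an infinite branch. -/
namespace BarInd

lemma posAlign_nil (R : B → B → Prop) (b₀ : B) : PosAlign R b₀ [] := by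
  simp [PosAlign]

lemma posAlign_single (R : B → B → Prop) (b₀ b : B) : PosAlign R b₀ [b] ↔ R b₀ b := by
  simp [PosAlign]

lemma posAlign_snoc2 (R : B → B → Prop) (b₀ : B) (w : List B) (b b' : B) :
    PosAlign R b₀ (w ++ [b, b']) ↔ R b b' := by
  have h : (w ++ [b, b']).reverse = b' :: b :: w.reverse := by simp
  unfold PosAlign
  rw [h]

end BarInd

universe u
open BarInd in
theorem stmt10 :
    (∀ (B : Type u) (T : List B → Prop), Productive T → InfBranch T) ↔
    (∀ (B : Type u) (R : B → B → Prop) (b₀ : B),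
      (∀ b, ∃ b', R b b') → InfBranch (PosAlign R b₀)) := by
  constructor
  · intro H B R b₀ hser
    apply H B (PosAlign R b₀)
    refine ⟨PosAlign R b₀, posAlign_nil R b₀, ?_⟩
    intro v hv
    refine ⟨hv, ?_⟩
    rcases List.eq_nil_or_concat v with rfl | ⟨w, b, rfl⟩
    · obtain ⟨a, ha⟩ := hser b₀
      exact ⟨a, (posAlign_single R b₀ a).mpr ha⟩
    · obtain ⟨a, ha⟩ := hser b
      refine ⟨a, ?_⟩
      have : w.concat b ++ [a] = w ++ [b, a] := by simp
      rw [this]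
      exact (posAlign_snoc2 R b₀ w b a).mpr ha
  · intro H B T hprod
    obtain ⟨X, hX0, hXstep⟩ := hprod
    -- relation on List B
    set R : List B → List B → Prop := fun u v => (X u → X v) ∧ ∃ a, v = u ++ [a] with hR
    have hser : ∀ u, ∃ v, R u v := by
      intro u
      by_cases hu : X u
      · obtain ⟨a, ha⟩ := (hXstep u hu).2
        exact ⟨u ++ [a], fun _ => ha, a, rfl⟩
      · obtain ⟨a, ha⟩ := (hXstep [] hX0).2
        exact ⟨u ++ [a], fun h => absurd h hu, a, rfl⟩
    obtain ⟨α, hα⟩ := H (List B) R [] hser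
    -- prefix lists of α
    have hpref : ∀ n, SeqPrefix (List.ofFn fun i : Fin n => α i) α := by
      intro n i
      have hl : (List.ofFn fun i : Fin n => α i).length = n := by simp
      rw [List.get_ofFn]
      simp
    have h0 : R [] (α 0) := by
      have h1 := hα (List.ofFn fun i : Fin 1 => α i) (hpref 1)
      have e : (List.ofFn fun i : Fin 1 => α i) = [α 0] := by
        simp [List.ofFn_succ]
      rw [e] at h1
      exact (posAlign_single R [] (α 0)).mp h1
    have hstep : ∀ n, R (α n) (α (n + 1)) := by
      intro n
      have h1 := hα (List.ofFn fun i : Fin (n + 2) => α i) (hpref (n + 2))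
      have h2 : (List.ofFn fun i : Fin (n + 2) => α i) =
          (List.ofFn fun i : Fin n => α i) ++ [α n, α (n + 1)] := by
        apply List.ext_get
        · simp
        · intro i hi hi'
          simp only [List.length_ofFn] at hi
          rw [List.get_ofFn]
          rcases lt_trichotomy i n with h | rfl | h
          · simp [List.getElem_append, h]
          · have : ([α i, α (i + 1)] : List (List B)).get ⟨0, by simp⟩ = α i := rfl
            simp [List.getElem_append]
          · have hie : i = n + 1 := by omega
            subst hie
            simp [List.getElem_append]
      rw [h2] at h1
      exact (posAlign_snoc2 R [] _ _ _).mp h1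
    -- X holds along α, and each step extends by one element
    have hXα : ∀ n, X (α n) := by
      intro n
      induction n with
      | zero => exact h0.1 hX0
      | succ k ih => exact (hstep k).1 ih
    have hext : ∀ n, ∃ a, α (n + 1) = α n ++ [a] := fun n => (hstep n).2
    obtain ⟨a0, ha0⟩ := h0.2
    have hα0 : α 0 = [a0] := by simpa using ha0
    have hlen : ∀ n, (α n).length = n + 1 := by
      intro n
      induction n with
      | zero => simp [hα0]
      | succ k ih =>
        obtain ⟨a, ha⟩ := hext k
        simp [ha, ih]
    -- define β
    set β : ℕ → B := fun n => (α n).getD n a0 with hβ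
    have hstable : ∀ n i, i ≤ n → (α n).getD i a0 = β i := by
      intro n
      induction n with
      | zero =>
        intro i hi
        have : i = 0 := by omega
        subst this
        rfl
      | succ k ih =>
        intro i hi
        rcases Nat.lt_or_ge i (k + 1) with h | h
        · obtain ⟨a, ha⟩ := hext k
          rw [ha, List.getD_append _ _ _ _ (by rw [hlen]; exact h)]
          exact ih i (by omega)
        · have : i = k + 1 := by omega
          subst this
          rfl
    refine ⟨β, ?_⟩
    intro u hu
    rcases Nat.eq_zero_or_pos u.length with h0l | h0l
    · rw [List.length_eq_zero_iff.mp h0l]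
      exact (hXstep [] hX0).1
    · obtain ⟨n, hn⟩ : ∃ n, u.length = n + 1 := ⟨u.length - 1, by omega⟩
      have hu_eq : u = α n := by
        apply List.ext_get
        · rw [hn, hlen]
        · intro i hi hi'
          have hiu : i < u.length := hi
          have h1 : u.get ⟨i, hi⟩ = β i := hu ⟨i, hi⟩
          have h2 : (α n).get ⟨i, hi'⟩ = (α n).getD i a0 := by
            rw [List.getD_eq_getElem _ _ hi']
            simp
          rw [h1, h2, hstable n i (by rw [hlen] at hi'; omega)]
      rw [hu_eq]
      exact (hXstep _ (hXα n)).1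
end

section
/- Let B be a type and R : ℕ → B → Prop a relation. Then countable choice for R, namely ((∀ n, ∃ b, R(n,b)) → ∃ α : ℕ → B, ∀ n, R(n, α(n))), holds if and only if (R^ℕ⊤ productive → R^ℕ⊤ has an infinite branch) holds. Dually, weak bar induction for R, namely ((∀ α : ℕ → B, ∃ n, R(n, α(n))) → ∃ n, ∀ b, R(n,b)), holds if and only if (R^ℕ⊥ barred → R^ℕ⊥ inductively barred) holds. -/
open BarInd

private lemma BarInd.seqpos_snoc {B : Type*} (R : ℕ → B → Prop) (w : List B) (b : B) :
    SeqPosAlign R (w ++ [b]) ↔ R w.length b := by simp [SeqPosAlign]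

private lemma BarInd.seqneg_snoc {B : Type*} (R : ℕ → B → Prop) (w : List B) (b : B) :
    SeqNegAlign R (w ++ [b]) ↔ R w.length b := by simp [SeqNegAlign]

private lemma BarInd.prefix_map_range {B : Type*} (α : ℕ → B) (n : ℕ) :
    SeqPrefix ((List.range n).map α) α := by
  intro i
  simp [SeqPrefix]

open BarInd in
theorem stmt11 {B : Type*} (R : ℕ → B → Prop) :
    (((∀ n, ∃ b, R n b) → ∃ α : ℕ → B, ∀ n, R n (α n)) ↔
      (Productive (SeqPosAlign R) → InfBranch (SeqPosAlign R))) ∧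
    (((∀ α : ℕ → B, ∃ n, R n (α n)) → ∃ n, ∀ b, R n b) ↔
      (Barred (SeqNegAlign R) → IndBarred (SeqNegAlign R))) := by
  constructor
  · constructor
    · -- AC → (Productive → InfBranch)
      rintro ac ⟨X, hX0, hXcl⟩
      have key : ∀ n, ∃ v : List B, X v ∧ v.length = n := by
        intro n
        induction n with
        | zero => exact ⟨[], hX0, rfl⟩
        | succ n ih =>
          obtain ⟨v, hv, hl⟩ := ih
          obtain ⟨a, ha⟩ := (hXcl v hv).2
          exact ⟨v ++ [a], ha, by simp [hl]⟩
      have hall : ∀ n, ∃ b, R n b := by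
        intro n
        obtain ⟨v, hv, hl⟩ := key n
        obtain ⟨a, ha⟩ := (hXcl v hv).2
        exact ⟨a, hl ▸ ((seqpos_snoc R v a).1 (hXcl _ ha).1)⟩
      obtain ⟨α, hα⟩ := ac hall
      refine ⟨α, fun u hu => ?_⟩
      rcases List.eq_nil_or_concat u with rfl | ⟨w, b, rfl⟩
      · trivial
      · rw [List.concat_eq_append] at hu ⊢
        rw [seqpos_snoc]
        have hb : b = α w.length := by
          have := hu ⟨w.length, by simp⟩
          simpa using this
        exact hb ▸ hα w.length
    · -- (Productive → InfBranch) → AC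
      intro h hall
      have hprod : Productive (SeqPosAlign R) := by
        refine ⟨SeqPosAlign R, trivial, fun v hv => ⟨hv, ?_⟩⟩
        obtain ⟨b, hb⟩ := hall v.length
        exact ⟨b, (seqpos_snoc R v b).2 hb⟩
      obtain ⟨α, hα⟩ := h hprod
      refine ⟨α, fun n => ?_⟩
      have := hα ((List.range (n+1)).map α) (prefix_map_range α (n+1))
      rw [List.range_succ, List.map_append] at this
      simpa using (seqpos_snoc R _ _).1 this
  · constructor
    · -- WBI → (Barred → IndBarred)
      intro wbi hbar
      have hex : ∀ α : ℕ → B, ∃ n, R n (α n) := by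
        intro α
        obtain ⟨u, hu, hT⟩ := hbar α
        rcases List.eq_nil_or_concat u with rfl | ⟨w, b, rfl⟩
        · exact absurd hT (by simp [SeqNegAlign])
        · rw [List.concat_eq_append] at hu hT
          refine ⟨w.length, ?_⟩
          have hb : b = α w.length := by
            have := hu ⟨w.length, by simp⟩
            simpa using this
          exact hb ▸ (seqneg_snoc R w b).1 hT
      obtain ⟨n, hn⟩ := wbi hex
      have key : ∀ k u, u.length + k = n + 1 → HerClos (SeqNegAlign R) u := by
        intro k
        induction k with
        | zero =>
          intro u hl
          rcases List.eq_nil_or_concat u with rfl | ⟨w, b, rfl⟩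
          · simp at hl
          · rw [List.concat_eq_append] at hl ⊢
            refine HerClos.base _ ((seqneg_snoc R w b).2 ?_)
            have : w.length = n := by simpa using hl
            exact this ▸ hn b
        | succ k ih =>
          intro u hl
          exact HerClos.step _ (fun a => ih (u ++ [a]) (by simp; omega))
      exact key (n+1) [] (by simp)
    · -- (Barred → IndBarred) → WBI
      intro h hex
      have hbar : Barred (SeqNegAlign R) := by
        intro α
        obtain ⟨n, hn⟩ := hex α
        refine ⟨(List.range (n+1)).map α, prefix_map_range α (n+1), ?_⟩
        rw [List.range_succ, List.map_append]
        simpa using (seqneg_snoc R _ _).2 (by simpa using hn)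
      have hind := h hbar
      have key : ∀ u, HerClos (SeqNegAlign R) u →
          SeqNegAlign R u ∨ ∃ n, ∀ b, R n b := by
        intro u hu
        induction hu with
        | base u hT => exact Or.inl hT
        | step u hstep ih =>
          by_cases hc : ∃ n, ∀ b, R n b
          · exact Or.inr hc
          · refine Or.inr ⟨u.length, fun b => ?_⟩
            rcases ih b with hT | hc'
            · exact (seqneg_snoc R u b).1 hT
            · exact absurd hc' hc
      rcases key [] hind with hT | hc
      · exact absurd hT (by simp [SeqNegAlign])
      · exact hc
end

section
/- Let B be a type. (i) For every predicate T on (ℕ × B)* closed under restriction (v ⊆ v' and v' ∈ T imply v ∈ T): T is ℕ-B-approximable if and only if ‖T‖ is productive. (ii) For every predicate T on B* closed under restriction (u ⋆ b ∈ T implies u ∈ T): the upwards arborification of T̂ is ℕ-B-approximable if and only if T is productive. Dually, (iii) for every predicate T on (ℕ × B)* closed under extension (v ∈ T and v ⊆ v' imply v' ∈ T): T is inductively ℕ-B-barred if and only if ‖T‖ is inductively barred; and (iv) for every predicate T on B* closed under extension: the upwards monotonisation of T̂ is inductively ℕ-B-barred if and only if T is inductively barred. -/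
namespace BarInd

variable {B : Type*}

lemma ord_append (u : List B) (b : B) :
    ordSeq (u ++ [b]) = ordSeq u ++ [(u.length, b)] := by
  simp [ordSeq, List.zipIdx_append]

lemma mem_ord {u : List B} {n : ℕ} {b : B} : (n, b) ∈ ordSeq u ↔ u[n]? = some b := by
  simp only [ordSeq, List.mem_map]
  constructor
  · rintro ⟨⟨x, i⟩, h, he⟩
    simp at he
    obtain ⟨rfl, rfl⟩ := he
    exact List.mk_mem_zipIdx_iff_getElem?.mp h
  · intro h
    exact ⟨(b, n), List.mk_mem_zipIdx_iff_getElem?.mpr h, rfl⟩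

lemma not_indom (u : List B) : ¬ InDom (ordSeq u) u.length := by
  rintro ⟨b, hb⟩
  rw [mem_ord] at hb
  obtain ⟨h, -⟩ := List.getElem?_eq_some_iff.mp hb
  simp [ordSeq] at h

lemma prefix_snoc {w u' : List B} {b : B} (h : w <+: u') (hb : u'[w.length]? = some b) :
    w ++ [b] <+: u' := by
  obtain ⟨t, rfl⟩ := h
  rw [List.getElem?_append_right (le_refl _)] at hb
  simp at hb
  cases t with
  | nil => simp at hb
  | cons c t' =>
    simp at hb
    exact ⟨t', by simp [hb]⟩

lemma psub_ord_of_prefix {u u' : List B} (h : u <+: u') :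
    PSub (ordSeq u) (ordSeq u') := by
  rintro ⟨n, b⟩ hx
  rw [mem_ord] at hx ⊢
  obtain ⟨t, rfl⟩ := h
  obtain ⟨hn, -⟩ := List.getElem?_eq_some_iff.mp hx
  rw [List.getElem?_append_left hn]
  exact hx

lemma prefix_of_psub_ord {u u' : List B} (h : PSub (ordSeq u) (ordSeq u')) :
    u <+: u' := by
  induction u using List.reverseRecOn with
  | nil => exact List.nil_prefix
  | append_singleton w b ih =>
    have hw : w <+: u' := by
      apply ih
      intro x hx
      exact h x (by rw [ord_append]; exact List.mem_append_left _ hx)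
    have hb : (w.length, b) ∈ ordSeq u' := by
      apply h
      rw [ord_append]
      exact List.mem_append_right _ (by simp)
    exact prefix_snoc hw (mem_ord.mp hb)

lemma mono_append {T : List B → Prop} (hT : ∀ u a, T u → T (u ++ [a]))
    (t : List B) : ∀ u, T u → T (u ++ t) := by
  induction t with
  | nil => intro u hu; simpa using hu
  | cons c t' ih => intro u hu; simpa using ih (u ++ [c]) (hT u c hu)

lemma mono_prefix {T : List B → Prop} (hT : ∀ u a, T u → T (u ++ [a]))
    {u u' : List B} (h : u <+: u') (hu : T u) : T u' := by
  obtain ⟨t, rfl⟩ := h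
  exact mono_append hT t u hu

lemma tree_append {T : List B → Prop} (hT : ∀ u a, T (u ++ [a]) → T u)
    (t : List B) : ∀ u, T (u ++ t) → T u := by
  induction t using List.reverseRecOn with
  | nil => intro u hu; simpa using hu
  | append_singleton t' c ih =>
    intro u hu
    exact ih u (hT (u ++ t') c (by simpa using hu))

lemma tree_prefix {T : List B → Prop} (hT : ∀ u a, T (u ++ [a]) → T u)
    {u u' : List B} (h : u <+: u') (hu : T u') : T u := by
  obtain ⟨t, rfl⟩ := h
  exact tree_append hT t u hu

lemma prune_extend {T : List B → Prop} {Y : List B → Prop}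
    (hY : ∀ v, Y v → T v ∧ ∃ a, Y (v ++ [a])) {u : List B} (hu : Y u) (k : ℕ) :
    ∃ u', u <+: u' ∧ u'.length = u.length + k ∧ Y u' := by
  induction k with
  | zero => exact ⟨u, List.prefix_refl u, rfl, hu⟩
  | succ k ih =>
    obtain ⟨u', hp, hl, hu'⟩ := ih
    obtain ⟨a, ha⟩ := (hY u' hu').2
    exact ⟨u' ++ [a], hp.trans (List.prefix_append u' [a]), by simp; omega, ha⟩

lemma herclos_of_extensions {S : List B → Prop} (m : ℕ) :
    ∀ u : List B, (∀ u', u <+: u' → u'.length = u.length + m → HerClos S u') →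
      HerClos S u := by
  induction m with
  | zero => exact fun u h => h u (List.prefix_refl u) rfl
  | succ m ih =>
    intro u h
    apply HerClos.step
    intro b
    apply ih
    intro u' hp hl
    apply h u' ((List.prefix_append u [b]).trans hp)
    simp at hl ⊢
    omega

lemma herclos_congr {S S' : List B → Prop} (h : ∀ u, S u → S' u) {u : List B}
    (hu : HerClos S u) : HerClos S' u := by
  induction hu with
  | base u hu => exact HerClos.base u (h u hu)
  | step u _ ih => exact HerClos.step u ih

lemma productive_congr {T T' : List B → Prop} (h : ∀ u, T u → T' u)
    (hp : Productive T) : Productive T' := by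
  obtain ⟨Y, hY0, hY⟩ := hp
  exact ⟨Y, hY0, fun v hv => ⟨h v (hY v hv).1, (hY v hv).2⟩⟩

/-- Part (i). -/
lemma part_i (T : List (ℕ × B) → Prop) (hT : ∀ v v', PSub v v' → T v' → T v) :
    Approximable T ↔ Productive (normT T) := by
  constructor
  · rintro ⟨X, hX0, hX⟩
    refine ⟨fun u => X (ordSeq u), (by simpa [ordSeq] using hX0), fun v hv => ?_⟩
    refine ⟨(hX _ hv).1 _ (fun x hx => hx), ?_⟩
    obtain ⟨b, hb⟩ := (hX _ hv).2 v.length (not_indom v)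
    exact ⟨b, show X (ordSeq (v ++ [b])) by rw [ord_append]; exact hb⟩
  · rintro ⟨Y, hY0, hY⟩
    refine ⟨fun w => ∃ u, Y u ∧ PSub w (ordSeq u), ⟨[], hY0, fun x hx => by simp at hx⟩,
      ?_⟩
    rintro w ⟨u, hu, hsub⟩
    constructor
    · intro v' hv'
      exact hT v' (ordSeq u) (fun x hx => hsub x (hv' x hx)) (hY u hu).1
    · intro n _
      obtain ⟨u', hp, hl, hu'⟩ := prune_extend hY hu (n + 1)
      have hn : n < u'.length := by omega
      refine ⟨u'[n], u', hu', ?_⟩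
      intro x hx
      rcases List.mem_append.mp hx with hx | hx
      · exact psub_ord_of_prefix hp x (hsub x hx)
      · simp at hx
        subst hx
        exact mem_ord.mpr (List.getElem?_eq_getElem hn)

/-- Part (ii). -/
lemma part_ii (T : List B → Prop) (hT : ∀ u a, T (u ++ [a]) → T u) :
    Approximable (UpPairArbor (hatT T)) ↔ Productive T := by
  have hrc : ∀ v v' : List (ℕ × B), PSub v v' → UpPairArbor (hatT T) v' →
      UpPairArbor (hatT T) v := by
    rintro v v' hs ⟨w, hw, hh⟩
    exact ⟨w, fun x hx => hw x (hs x hx), hh⟩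
  rw [part_i _ hrc]
  have key : ∀ u : List B, normT (UpPairArbor (hatT T)) u ↔ T u := by
    intro u
    constructor
    · rintro ⟨v', hsub, u', hT', rfl⟩
      exact tree_prefix hT (prefix_of_psub_ord hsub) hT'
    · intro h
      exact ⟨ordSeq u, fun x hx => hx, u, h, rfl⟩
  constructor
  · exact productive_congr (fun u => (key u).mp)
  · exact productive_congr (fun u => (key u).mpr)

lemma part_iii_aux (T : List (ℕ × B) → Prop) (hT : ∀ v v', T v → PSub v v' → T v')
    {w : List (ℕ × B)} (h : IndPairBarred T w) :
    ∀ u : List B, PSub w (ordSeq u) → HerClos (normT T) u := by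
  induction h with
  | base w hw =>
    intro u hsub
    obtain ⟨v, hvw, hv⟩ := hw
    exact HerClos.base u (hT v (ordSeq u) hv (fun x hx => hsub x (hvw x hx)))
  | step w n hn hrec ih =>
    intro u hsub
    by_cases hlt : n < u.length
    · apply ih u[n] u
      intro x hx
      rcases List.mem_append.mp hx with hx | hx
      · exact hsub x hx
      · simp at hx
        subst hx
        exact mem_ord.mpr (List.getElem?_eq_getElem hlt)
    · apply herclos_of_extensions (n + 1 - u.length)
      intro u' hp hl
      have hn' : n < u'.length := by omega
      apply ih u'[n] u'
      intro x hx
      rcases List.mem_append.mp hx with hx | hx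
      · exact psub_ord_of_prefix hp x (hsub x hx)
      · simp at hx
        subst hx
        exact mem_ord.mpr (List.getElem?_eq_getElem hn')

lemma part_iii_aux2 (T : List (ℕ × B) → Prop) {u : List B}
    (h : HerClos (normT T) u) : IndPairBarred T (ordSeq u) := by
  induction h with
  | base u hu => exact IndPairBarred.base _ ⟨ordSeq u, fun x hx => hx, hu⟩
  | step u _ ih =>
    apply IndPairBarred.step (ordSeq u) u.length (not_indom u)
    intro b
    rw [← ord_append]
    exact ih b

/-- Part (iii). -/
lemma part_iii (T : List (ℕ × B) → Prop) (hT : ∀ v v', T v → PSub v v' → T v') :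
    InductivelyPairBarred T ↔ IndBarred (normT T) := by
  constructor
  · intro h
    exact part_iii_aux T hT h [] (fun x hx => by simp at hx)
  · intro h
    simpa [ordSeq, InductivelyPairBarred] using part_iii_aux2 T h

/-- Part (iv). -/
lemma part_iv (T : List B → Prop) (hT : ∀ u a, T u → T (u ++ [a])) :
    InductivelyPairBarred (UpPairMonot (hatT T)) ↔ IndBarred T := by
  have hec : ∀ v v' : List (ℕ × B), UpPairMonot (hatT T) v → PSub v v' →
      UpPairMonot (hatT T) v' := by
    rintro v v' ⟨w, hw, hh⟩ hs
    exact ⟨w, fun x hx => hs x (hw x hx), hh⟩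
  rw [part_iii _ hec]
  have key : ∀ u : List B, normT (UpPairMonot (hatT T)) u ↔ T u := by
    intro u
    constructor
    · rintro ⟨v', hsub, u', hT', rfl⟩
      exact mono_prefix hT (prefix_of_psub_ord hsub) hT'
    · intro h
      exact ⟨ordSeq u, fun x hx => hx, u, h, rfl⟩
  constructor
  · exact herclos_congr (fun u => (key u).mp)
  · exact herclos_congr (fun u => (key u).mpr)

end BarInd


open BarInd in
theorem stmt13 {B : Type*} :
    (∀ T : List (ℕ × B) → Prop, (∀ v v', PSub v v' → T v' → T v) →
      (Approximable T ↔ Productive (normT T))) ∧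
    (∀ T : List B → Prop, (∀ u a, T (u ++ [a]) → T u) →
      (Approximable (UpPairArbor (hatT T)) ↔ Productive T)) ∧
    (∀ T : List (ℕ × B) → Prop, (∀ v v', T v → PSub v v' → T v') →
      (InductivelyPairBarred T ↔ IndBarred (normT T))) ∧
    (∀ T : List B → Prop, (∀ u a, T u → T (u ++ [a])) →
      (InductivelyPairBarred (UpPairMonot (hatT T)) ↔ IndBarred T)) := by
  exact ⟨part_i, part_ii, part_iii, part_iv⟩
end

section
/- Let B be a type. The scheme (∀ predicate T on B*, T productive → T has an infinite branch) holds if and only if the scheme (∀ predicate T on (ℕ × B)*, T ℕ-B-approximable → T has an ℕ-B-choice function) holds. Dually, (∀ predicate T on B*, T barred → T inductively barred) holds if and only if (∀ predicate T on (ℕ × B)*, T ℕ-B-barred → T inductively ℕ-B-barred) holds. -/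
namespace BarIndProof

open BarInd

variable {B : Type*}

lemma mem_ordSeq {u : List B} {a : ℕ} {b : B} :
    (a, b) ∈ ordSeq u ↔ u[a]? = some b := by
  rw [ordSeq, ← List.mk_mem_zipIdx_iff_getElem?]
  constructor
  · rintro h
    obtain ⟨⟨x, i⟩, hm, he⟩ := List.mem_map.1 h
    simp only [Prod.swap, Prod.mk.injEq] at he
    obtain ⟨rfl, rfl⟩ := he
    exact hm
  · intro h
    exact List.mem_map.2 ⟨(b, a), h, rfl⟩

lemma ordSeq_concat (u : List B) (b : B) :
    ordSeq (u ++ [b]) = ordSeq u ++ [(u.length, b)] := by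
  simp [ordSeq, List.zipIdx_append]

lemma psub_ordSeq_of_prefix {u u' : List B} (h : u <+: u') :
    PSub (ordSeq u) (ordSeq u') := by
  rintro ⟨a, b⟩ hm
  rw [mem_ordSeq] at hm ⊢
  obtain ⟨t, rfl⟩ := h
  have ha : a < u.length := (List.getElem?_eq_some_iff.1 hm).1
  rw [List.getElem?_append_left ha]
  exact hm

lemma prefix_of_psub_ordSeq {u u' : List B} (h : PSub (ordSeq u) (ordSeq u')) :
    u <+: u' := by
  have hmem : ∀ i (hi : i < u.length), u'[i]? = some u[i] := by
    intro i hi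
    exact mem_ordSeq.1 (h (i, u[i]) (mem_ordSeq.2 (List.getElem?_eq_getElem hi)))
  have hlen : u.length ≤ u'.length := by
    by_contra hc
    push_neg at hc
    have := hmem u'.length hc
    simp [List.getElem?_eq_none (le_refl u'.length)] at this
  have : u = u'.take u.length := by
    apply List.ext_getElem (by simp [hlen])
    intro i h1 h2
    have := hmem i h1
    rw [List.getElem?_eq_getElem (by omega : i < u'.length)] at this
    simp [List.getElem_take]
    exact (Option.some.inj this).symm
  rw [this]
  exact List.take_prefix _ _

lemma not_indom_ordSeq (u : List B) : ¬ InDom (ordSeq u) u.length := by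
  rintro ⟨b, hb⟩
  rw [mem_ordSeq] at hb
  simp at hb

lemma seqPrefix_rangeMap (α : ℕ → B) (n : ℕ) :
    SeqPrefix ((List.range n).map α) α := by
  intro i
  have hi := i.2
  simp at hi ⊢

lemma psub_of_pairPrefix {v : List (ℕ × B)} {α : ℕ → B} (h : PairPrefix v α)
    {n : ℕ} (hn : ∀ p ∈ v, p.1 < n) :
    PSub v (ordSeq ((List.range n).map α)) := by
  rintro ⟨a, b⟩ hm
  rw [mem_ordSeq]
  have ha : a < n := hn _ hm
  have hb : α a = b := h _ hm
  simp [ha, hb, List.getElem?_map, List.getElem?_range ha]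

lemma pairPrefix_ordSeq {u : List B} {α : ℕ → B} (h : SeqPrefix u α) :
    PairPrefix (ordSeq u) α := by
  rintro ⟨a, b⟩ hm
  rw [mem_ordSeq] at hm
  obtain ⟨ha, hb⟩ := List.getElem?_eq_some_iff.1 hm
  have := h ⟨a, ha⟩
  simp at this ⊢
  rw [← hb, ← this]

lemma exists_bound (v : List (ℕ × B)) : ∃ n, ∀ p ∈ v, p.1 < n := by
  induction v with
  | nil => exact ⟨0, by simp⟩
  | cons p v ih =>
    obtain ⟨n, hn⟩ := ih
    refine ⟨max n (p.1 + 1), ?_⟩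
    intro q hq
    rcases List.mem_cons.1 hq with rfl | hq
    · exact lt_max_of_lt_right (Nat.lt_succ_self _)
    · exact lt_max_of_lt_left (hn q hq)

lemma prefix_concat_cases {u u' : List B} {a : B} (h : u' <+: u ++ [a]) :
    u' <+: u ∨ u' = u ++ [a] := by
  rcases le_or_gt u'.length u.length with hl | hl
  · exact Or.inl (List.prefix_of_prefix_length_le h ⟨[a], rfl⟩ hl)
  · right
    apply List.IsPrefix.eq_of_length h
    have := h.length_le
    simp at this ⊢
    omega

lemma extend_pruning {T X : List B → Prop}
    (hX : ∀ v, X v → T v ∧ ∃ a, X (v ++ [a])) :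
    ∀ (k : ℕ) (u : List B), X u →
      ∃ u', u <+: u' ∧ u'.length = u.length + k ∧ X u' := by
  intro k
  induction k with
  | zero => exact fun u hu => ⟨u, List.prefix_refl u, rfl, hu⟩
  | succ k ih =>
    intro u hu
    obtain ⟨a, ha⟩ := (hX u hu).2
    obtain ⟨u', h1, h2, h3⟩ := ih (u ++ [a]) ha
    refine ⟨u', List.IsPrefix.trans (List.prefix_append u [a]) h1, ?_, h3⟩
    simp at h2
    omega

lemma herClos_of_exts (T : List B → Prop) :
    ∀ (k : ℕ) (u : List B),
      (∀ u', u <+: u' → u'.length = u.length + k → HerClos T u') → HerClos T u := by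
  intro k
  induction k with
  | zero => exact fun u h => h u (List.prefix_refl u) rfl
  | succ k ih =>
    intro u h
    refine HerClos.step u (fun a => ih (u ++ [a]) (fun u' h1 h2 => ?_))
    refine h u' (List.IsPrefix.trans (List.prefix_append u [a]) h1) ?_
    simp at h2 ⊢
    omega

lemma upMonot_herClos {T : List B → Prop} :
    ∀ u, HerClos (UpMonot T) u → ∃ u', u' <+: u ∧ HerClos T u' := by
  intro u h
  induction h with
  | base u hu =>
    obtain ⟨u', h1, h2⟩ := hu
    exact ⟨u', h1, HerClos.base u' h2⟩
  | step u h ih =>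
    by_cases hc : ∃ u', u' <+: u ∧ HerClos T u'
    · exact hc
    · refine ⟨u, List.prefix_refl u, HerClos.step u (fun a => ?_)⟩
      obtain ⟨u', h1, h2⟩ := ih a
      rcases prefix_concat_cases h1 with h1 | rfl
      · exact absurd ⟨u', h1, h2⟩ hc
      · exact h2

end BarIndProof

open BarInd in
theorem stmt15 {B : Type*} :
    ((∀ T : List B → Prop, Productive T → InfBranch T) ↔
      (∀ T : List (ℕ × B) → Prop, Approximable T → PairChoiceFn T)) ∧
    ((∀ T : List B → Prop, Barred T → IndBarred T) ↔
      (∀ T : List (ℕ × B) → Prop, PairBarred T → InductivelyPairBarred T)) := by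
  constructor
  · constructor
    · -- Productive→InfBranch implies Approximable→PairChoiceFn
      intro H T' hT'
      have hP : Productive (fun u : List B => ApproxFrom T' (BarInd.ordSeq u)) := by
        refine ⟨fun u => ApproxFrom T' (BarInd.ordSeq u), (by show ApproxFrom T' (BarInd.ordSeq []); rw [show BarInd.ordSeq ([] : List B) = [] by simp [BarInd.ordSeq]]; exact hT'), ?_⟩
        intro u hu
        refine ⟨hu, ?_⟩
        obtain ⟨X', hX'0, hX'⟩ := hu
        obtain ⟨b, hb⟩ := (hX' _ hX'0).2 u.length (BarIndProof.not_indom_ordSeq u)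
        exact ⟨b, X', by rw [BarIndProof.ordSeq_concat]; exact hb, hX'⟩
      obtain ⟨α, hα⟩ := H _ hP
      refine ⟨α, fun v hv => ?_⟩
      obtain ⟨n, hn⟩ := BarIndProof.exists_bound v
      obtain ⟨X', hX'0, hX'⟩ := hα ((List.range n).map α) (BarIndProof.seqPrefix_rangeMap α n)
      exact (hX' _ hX'0).1 v (BarIndProof.psub_of_pairPrefix hv hn)
    · -- Approximable→PairChoiceFn implies Productive→InfBranch
      intro H T hT
      obtain ⟨X, hX0, hX⟩ := hT
      set X'' : List B → Prop := fun v => X v ∧ DownArbor T v with hX''def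
      have hX''0 : X'' [] := by
        refine ⟨hX0, fun u' hu' => ?_⟩
        rw [List.prefix_nil.1 hu']
        exact (hX [] hX0).1
      have hX'' : ∀ v, X'' v → DownArbor T v ∧ ∃ a, X'' (v ++ [a]) := by
        rintro v ⟨hv, hd⟩
        refine ⟨hd, ?_⟩
        obtain ⟨a, ha⟩ := (hX v hv).2
        refine ⟨a, ha, fun u' hu' => ?_⟩
        rcases BarIndProof.prefix_concat_cases hu' with h | rfl
        · exact hd u' h
        · exact (hX _ ha).1
      have hApp : Approximable (fun v : List (ℕ × B) =>
          ∃ u, DownArbor T u ∧ PSub v (BarInd.ordSeq u)) := by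
        refine ⟨fun w => ∃ u, X'' u ∧ PSub w (BarInd.ordSeq u),
          ⟨[], hX''0, fun x hx => by simp [PSub, BarInd.ordSeq] at hx⟩, ?_⟩
        rintro w ⟨u, hu, hw⟩
        constructor
        · intro v' hv'
          exact ⟨u, (hX'' u hu).1, fun x hx => hw x (hv' x hx)⟩
        · intro a ha
          obtain ⟨u', hpre, hlen, hu'⟩ := BarIndProof.extend_pruning hX'' (a + 1 - u.length) u hu
          have hau' : a < u'.length := by omega
          refine ⟨u'[a], u', hu', ?_⟩
          intro x hx
          rcases List.mem_append.1 hx with hx | hx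
          · exact BarIndProof.psub_ordSeq_of_prefix hpre x (hw x hx)
          · have hxe : x = (a, u'[a]) := by simpa using hx
            rw [hxe, BarIndProof.mem_ordSeq]
            exact List.getElem?_eq_getElem hau'
      obtain ⟨α, hα⟩ := H _ hApp
      refine ⟨α, fun u hu => ?_⟩
      obtain ⟨u'', hd, hsub⟩ := hα (BarInd.ordSeq u) (BarIndProof.pairPrefix_ordSeq hu)
      exact hd u (BarIndProof.prefix_of_psub_ordSeq hsub)
  · constructor
    · -- Barred→IndBarred implies PairBarred→InductivelyPairBarred
      intro H T' hT'
      have hB : Barred (fun u : List B => ∃ v, PSub v (BarInd.ordSeq u) ∧ T' v) := by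
        intro α
        obtain ⟨v, hv, hTv⟩ := hT' α
        obtain ⟨n, hn⟩ := BarIndProof.exists_bound v
        exact ⟨(List.range n).map α, BarIndProof.seqPrefix_rangeMap α n,
          ⟨v, BarIndProof.psub_of_pairPrefix hv hn, hTv⟩⟩
      have key : ∀ u, HerClos (fun u : List B => ∃ v, PSub v (BarInd.ordSeq u) ∧ T' v) u →
          IndPairBarred T' (BarInd.ordSeq u) := by
        intro u h
        induction h with
        | base u hu => exact IndPairBarred.base _ hu
        | step u h ih =>
          refine IndPairBarred.step _ u.length (BarIndProof.not_indom_ordSeq u) (fun b => ?_)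
          have := ih b
          rwa [BarIndProof.ordSeq_concat] at this
      have := key [] (H _ hB)
      rwa [show BarInd.ordSeq ([] : List B) = [] by simp [BarInd.ordSeq]] at this
    · -- PairBarred→InductivelyPairBarred implies Barred→IndBarred
      intro H T hT
      have hPB : PairBarred (fun v : List (ℕ × B) =>
          ∃ u, T u ∧ PSub (BarInd.ordSeq u) v) := by
        intro α
        obtain ⟨u, hu, hTu⟩ := hT α
        exact ⟨BarInd.ordSeq u, BarIndProof.pairPrefix_ordSeq hu, ⟨u, hTu, fun x hx => hx⟩⟩
      have key : ∀ w, IndPairBarred (fun v : List (ℕ × B) =>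
          ∃ u, T u ∧ PSub (BarInd.ordSeq u) v) w →
          ∀ u : List B, PSub w (BarInd.ordSeq u) → HerClos (UpMonot T) u := by
        intro w hw
        induction hw with
        | base w hb =>
          intro u hsub
          obtain ⟨v, hvw, u₀, hTu₀, hsub₀⟩ := hb
          exact HerClos.base u ⟨u₀,
            BarIndProof.prefix_of_psub_ordSeq (fun x hx => hsub _ (hvw _ (hsub₀ _ hx))), hTu₀⟩
        | step w a ha h ih =>
          intro u hsub
          apply BarIndProof.herClos_of_exts _ (a + 1 - u.length) u
          intro u' hpre hlen
          have hau' : a < u'.length := by omega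
          refine ih u'[a] u' ?_
          intro x hx
          rcases List.mem_append.1 hx with hx | hx
          · exact BarIndProof.psub_ordSeq_of_prefix hpre x (hsub x hx)
          · have hxe : x = (a, u'[a]) := by simpa using hx
            rw [hxe, BarIndProof.mem_ordSeq]
            exact List.getElem?_eq_getElem hau'
      have h0 := key [] (H _ hPB) [] (fun x hx => by simp [PSub] at hx)
      obtain ⟨u', hpre, hcl⟩ := BarIndProof.upMonot_herClos [] h0
      rw [List.prefix_nil.1 hpre] at hcl
      exact hcl
end

section
/- Let A := ℕ → Bool and define the predicate T on (A × ℕ)* by: v ∈ T iff for all pairs (f,n) and (f',n') occurring in v, n = n' implies f = f'. Then T is A-ℕ-approximable, but T has no A-ℕ-choice function. In particular, the scheme (∀ predicate T' on (A × ℕ)*, T' A-ℕ-approximable → T' has an A-ℕ-choice function) is false. -/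
open BarInd in
theorem stmt17 :
    Approximable (fun v : List ((ℕ → Bool) × ℕ) =>
        ∀ p ∈ v, ∀ q ∈ v, p.2 = q.2 → p.1 = q.1) ∧
    ¬ PairChoiceFn (fun v : List ((ℕ → Bool) × ℕ) =>
        ∀ p ∈ v, ∀ q ∈ v, p.2 = q.2 → p.1 = q.1) ∧
    ¬ (∀ T' : List ((ℕ → Bool) × ℕ) → Prop, Approximable T' → PairChoiceFn T') := by

  classical
  set T : List ((ℕ → Bool) × ℕ) → Prop :=
    fun v => ∀ p ∈ v, ∀ q ∈ v, p.2 = q.2 → p.1 = q.1 with hT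
  have happrox : Approximable T := by
    refine ⟨T, ?_, ?_⟩
    · intro p hp; simp at hp
    · intro w hw
      constructor
      · intro v' hsub p hp q hq
        exact hw p (hsub p hp) q (hsub q hq)
      · intro a _
        refine ⟨(w.map Prod.snd).sum + 1, ?_⟩
        have hlt : ∀ p ∈ w, p.2 < (w.map Prod.snd).sum + 1 := by
          intro p hp
          have : p.2 ≤ (w.map Prod.snd).sum :=
            List.single_le_sum (fun x _ => Nat.zero_le x) _
              (List.mem_map_of_mem (f := Prod.snd) hp)
          omega
        intro p hp q hq heq
        rcases List.mem_append.1 hp with hp | hp <;>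
        rcases List.mem_append.1 hq with hq | hq
        · exact hw p hp q hq heq
        · simp at hq; subst hq
          exact absurd heq (Nat.ne_of_lt (hlt p hp))
        · simp at hp; subst hp
          exact absurd heq.symm (Nat.ne_of_lt (hlt q hq))
        · simp at hp hq; subst hp; subst hq; rfl
  have hnochoice : ¬ PairChoiceFn T := by
    rintro ⟨α, hα⟩
    have hinj : Function.Injective α := by
      intro f g hfg
      have := hα [(f, α f), (g, α g)] (by
        intro p hp; simp at hp
        rcases hp with hp | hp <;> subst hp <;> rfl)
      exact this (f, α f) (by simp) (g, α g) (by simp) hfg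
    refine Function.cantor_injective
      (fun s : Set ℕ => α fun n => @decide (n ∈ s) (Classical.dec _)) ?_
    intro s t h
    have h2 := hinj h
    ext n
    have h3 := congrFun h2 n
    exact decide_eq_decide.mp h3
  exact ⟨happrox, hnochoice, fun h => hnochoice (h T happrox)⟩
end

section
/- Let A and B be types and R : A → B → Prop a relation. Define the positive alignment R⊤ as the predicate on (A × B)* given by v ∈ R⊤ iff R(a,b) for every pair (a,b) occurring in v. Then the axiom of choice for R, namely ((∀ a, ∃ b, R(a,b)) → ∃ α : A → B, ∀ a, R(a, α(a))), holds if and only if (R⊤ A-B-approximable → R⊤ has an A-B-choice function) holds. -/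
open BarInd in
theorem stmt18 {A B : Type*} (R : A → B → Prop) :
    ((∀ a, ∃ b, R a b) → ∃ α : A → B, ∀ a, R a (α a)) ↔
    (Approximable (fun v : List (A × B) => ∀ p ∈ v, R p.1 p.2) →
      PairChoiceFn (fun v : List (A × B) => ∀ p ∈ v, R p.1 p.2)) := by
  constructor
  · intro ac happ
    obtain ⟨X, hX0, hX⟩ := happ
    have hall : ∀ a, ∃ b, R a b := by
      intro a
      obtain ⟨b, hb⟩ := (hX [] hX0).2 a (by rintro ⟨b, hb⟩; simp at hb)
      exact ⟨b, ((hX _ hb).1 _ (fun x hx => hx)) (a, b) (by simp)⟩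
    obtain ⟨α, hα⟩ := ac hall
    exact ⟨α, fun v hv p hp => (hv p hp) ▸ hα p.1⟩
  · intro h hall
    have happ : Approximable (fun v : List (A × B) => ∀ p ∈ v, R p.1 p.2) := by
      refine ⟨fun v => ∀ p ∈ v, R p.1 p.2, by simp, fun w hw => ⟨fun v' hv' p hp => hw p (hv' p hp), ?_⟩⟩
      intro a _
      obtain ⟨b, hb⟩ := hall a
      exact ⟨b, fun p hp => by
        rcases List.mem_append.1 hp with h1 | h2
        · exact hw p h1
        · simp at h2; subst h2; exact hb⟩
    obtain ⟨α, hα⟩ := h happ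
    exact ⟨α, fun a => hα [(a, α a)] (by simp [PairPrefix]) (a, α a) (by simp)⟩
end
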